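/- For any finite bimatrix game with bounded payoffs, there exists a constant C ≥ 0 such that for every follower action b and every regret tolerance r ≥ 0 for which b is forceable with regret at most r, the optimistic Stackelberg value satisfies OSV(b,r) ≤ SV + C·r, where SV is the Stackelberg value of the game. -/

import Mathlib

open Finset

/-- Conic Carathéodory: any nonnegative combination of vectors indexed by a finset
can be rewritten as a nonnegative combination over a linearly independent subfamily. -/
lemma carath_cone {V : Type*} [AddCommGroup V] [Module ℝ V] {ι : Type*}
    (v : ι → V) (s : Finset ι) :
    ∀ μ : ι → ℝ, (∀ i, 0 ≤ μ i) →
    ∃ (t : Finset ι) (ν : ι → ℝ), t ⊆ s ∧ (∀ i, 0 ≤ ν i) ∧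
      LinearIndependent ℝ (fun i : t => v i) ∧
      ∑ i ∈ t, ν i • v i = ∑ i ∈ s, μ i • v i := by
  classical
  induction s using Finset.strongInduction with
  | _ s ih =>
    intro μ hμ
    by_cases hli : LinearIndependent ℝ (fun i : s => v i)
    · exact ⟨s, μ, subset_rfl, hμ, hli, rfl⟩
    · obtain ⟨g, hg0, j, hgj⟩ := Fintype.not_linearIndependent_iff.mp hli
      -- extend g to ι
      set lam : ι → ℝ := fun i => if h : i ∈ s then g ⟨i, h⟩ else 0 with hlam
      have hsum_lam : ∑ i ∈ s, lam i • v i = 0 := by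
        rw [← Finset.sum_attach s (fun i => lam i • v i)]
        rw [← hg0]
        apply Finset.sum_congr rfl
        intro i _
        simp [hlam, i.2]
      have hlam_j : lam (j : ι) ≠ 0 := by simp [hlam, j.2, hgj]
      -- wlog there's a positive coefficient
      have main : ∀ lam : ι → ℝ, (∑ i ∈ s, lam i • v i = 0) →
          (∃ j ∈ s, 0 < lam j) →
          ∃ (t : Finset ι) (ν : ι → ℝ), t ⊆ s ∧ (∀ i, 0 ≤ ν i) ∧
            LinearIndependent ℝ (fun i : t => v i) ∧
            ∑ i ∈ t, ν i • v i = ∑ i ∈ s, μ i • v i := by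
        intro lam hsum ⟨j0, hj0s, hj0pos⟩
        set P : Finset ι := s.filter (fun i => 0 < lam i) with hP
        have hPne : P.Nonempty := ⟨j0, by simp [hP, hj0s, hj0pos]⟩
        obtain ⟨i0, hi0P, hi0min⟩ := P.exists_min_image (fun i => μ i / lam i) hPne
        have hi0s : i0 ∈ s := (Finset.mem_filter.mp hi0P).1
        have hi0pos : 0 < lam i0 := (Finset.mem_filter.mp hi0P).2
        set τ : ℝ := μ i0 / lam i0 with hτ
        have hτ0 : 0 ≤ τ := div_nonneg (hμ i0) hi0pos.le
        set ν : ι → ℝ := fun i => μ i - τ * lam i with hν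
        have hν0 : ∀ i ∈ s, 0 ≤ ν i := by
          intro i his
          by_cases hpos : 0 < lam i
          · have hiP : i ∈ P := by simp [hP, his, hpos]
            have := hi0min i hiP
            have : τ * lam i ≤ μ i := by
              rw [div_le_div_iff₀ hi0pos hpos] at this
              calc τ * lam i = μ i0 / lam i0 * lam i := rfl
                _ ≤ μ i := by
                  rw [div_mul_eq_mul_div, div_le_iff₀ hi0pos]
                  linarith [this]
            simp [hν]; linarith
          · push_neg at hpos
            have : τ * lam i ≤ 0 := mul_nonpos_of_nonneg_of_nonpos hτ0 hpos
            simp [hν]; nlinarith [hμ i]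
        have hνi0 : ν i0 = 0 := by
          simp [hν, hτ, div_mul_cancel₀ (μ i0) hi0pos.ne']
        have hsub : s.erase i0 ⊂ s := Finset.erase_ssubset hi0s
        have hrw : ∑ i ∈ s.erase i0, ν i • v i = ∑ i ∈ s, μ i • v i := by
          have h1 : ∑ i ∈ s.erase i0, ν i • v i = ∑ i ∈ s, ν i • v i := by
            apply Finset.sum_erase
            simp [hνi0]
          rw [h1]
          have : ∑ i ∈ s, ν i • v i = ∑ i ∈ s, μ i • v i - τ • ∑ i ∈ s, lam i • v i := by
            rw [Finset.smul_sum, ← Finset.sum_sub_distrib]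
            apply Finset.sum_congr rfl
            intro i _
            simp [hν, sub_smul, smul_smul]
          rw [this, hsum, smul_zero, sub_zero]
        -- new coefficient function, zero outside erase
        set ν' : ι → ℝ := fun i => if i ∈ s.erase i0 then ν i else 0 with hν'
        have hν'0 : ∀ i, 0 ≤ ν' i := by
          intro i
          simp only [hν']
          split_ifs with h
          · exact hν0 i (Finset.mem_of_mem_erase h)
          · exact le_refl 0
        have hrw' : ∑ i ∈ s.erase i0, ν' i • v i = ∑ i ∈ s, μ i • v i := by
          rw [← hrw]; apply Finset.sum_congr rfl; intro i hi; simp only [hν', if_pos hi]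
        obtain ⟨t, ρ, hts, hρ, hli', hsum'⟩ := ih (s.erase i0) hsub ν' hν'0
        exact ⟨t, ρ, hts.trans (Finset.erase_subset _ _), hρ, hli', by rw [hsum', hrw']⟩
      rcases lt_or_gt_of_ne hlam_j with hneg | hpos
      · -- use -lam
        refine main (fun i => -lam i) ?_ ⟨j, j.2, by simpa using hneg⟩
        simp only [neg_smul, Finset.sum_neg_distrib, hsum_lam, neg_zero]
      · exact main lam hsum_lam ⟨j, j.2, hpos⟩

/-- A finitely generated convex cone in `n → ℝ` is closed. -/
lemma cone_closed {n : Type*} [Fintype n] {ι : Type*} [Fintype ι] (v : ι → n → ℝ) :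
    IsClosed {x : n → ℝ | ∃ μ : ι → ℝ, (∀ i, 0 ≤ μ i) ∧ x = ∑ i, μ i • v i} := by
  classical
  have hset : {x : n → ℝ | ∃ μ : ι → ℝ, (∀ i, 0 ≤ μ i) ∧ x = ∑ i, μ i • v i}
      = ⋃ (t : {t : Finset ι // LinearIndependent ℝ (fun i : t => v i)}),
        (fun ν : ↥t.1 → ℝ => ∑ i : ↥t.1, ν i • v (i : ι)) ''
          {ν : ↥t.1 → ℝ | ∀ i, 0 ≤ ν i} := by
    ext x
    simp only [Set.mem_setOf_eq, Set.mem_iUnion, Set.mem_image]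
    constructor
    · rintro ⟨μ, hμ, rfl⟩
      obtain ⟨t, ν, -, hν, hli, hsum⟩ := carath_cone v Finset.univ μ hμ
      refine ⟨⟨t, hli⟩, fun i => ν i, fun i => hν i, ?_⟩
      show ∑ i : ↥t, ν (i : ι) • v (i : ι) = _
      rw [← hsum, ← Finset.sum_attach t (fun i => ν i • v i)]
      rfl
    · rintro ⟨⟨t, hli⟩, ν, hν, rfl⟩
      refine ⟨fun i => if h : i ∈ t then ν ⟨i, h⟩ else 0, ?_, ?_⟩
      · intro i; by_cases h : i ∈ t <;> simp [h, hν]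
      · rw [← Finset.sum_subset (Finset.subset_univ t)
          (fun i _ hi => by simp [hi])]
        rw [← Finset.sum_attach t
          (fun i => (if h : i ∈ t then ν ⟨i, h⟩ else 0) • v i)]
        apply Finset.sum_congr rfl
        intro i _
        simp [i.2]
  rw [hset]
  apply isClosed_iUnion_of_finite
  rintro ⟨t, hli⟩
  set L : (↥t → ℝ) →ₗ[ℝ] (n → ℝ) :=
    { toFun := fun ν => ∑ i : ↥t, ν i • v (i : ι)
      map_add' := by
        intro a b; simp [add_smul, Finset.sum_add_distrib]
      map_smul' := by
        intro c a; simp [smul_smul, Finset.smul_sum] } with hL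
  have hinj : LinearMap.ker L = ⊥ := by
    rw [LinearMap.ker_eq_bot']
    intro m hm
    have := Fintype.linearIndependent_iff.mp hli m hm
    funext i; exact this i
  have hclemb := LinearMap.isClosedEmbedding_of_injective hinj
  have hcl : IsClosed {ν : ↥t → ℝ | ∀ i, 0 ≤ ν i} := by
    have : {ν : ↥t → ℝ | ∀ i, 0 ≤ ν i} = ⋂ i, {ν | 0 ≤ ν i} := by
      ext; simp [Set.mem_iInter]
    rw [this]
    exact isClosed_iInter fun i => isClosed_le continuous_const (continuous_apply i)
  exact hclemb.isClosedMap _ hcl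

/-- Farkas' lemma. -/
lemma farkas {n : Type*} [Fintype n] {ι : Type*} [Fintype ι]
    (v : ι → n → ℝ) (c : n → ℝ)
    (h : ∀ z : n → ℝ, (∀ i, 0 ≤ ∑ a, v i a * z a) → 0 ≤ ∑ a, c a * z a) :
    ∃ μ : ι → ℝ, (∀ i, 0 ≤ μ i) ∧ c = ∑ i, μ i • v i := by
  classical
  by_contra hc
  set K : Set (n → ℝ) := {x | ∃ μ : ι → ℝ, (∀ i, 0 ≤ μ i) ∧ x = ∑ i, μ i • v i} with hK
  have hcK : c ∉ K := by
    intro ⟨μ, hμ, hsum⟩; exact hc ⟨μ, hμ, hsum⟩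
  have hKconv : Convex ℝ K := by
    rintro x ⟨μ, hμ, rfl⟩ y ⟨ρ, hρ, rfl⟩ p q hp hq hpq
    refine ⟨fun i => p * μ i + q * ρ i,
      fun i => add_nonneg (mul_nonneg hp (hμ i)) (mul_nonneg hq (hρ i)), ?_⟩
    rw [Finset.smul_sum, Finset.smul_sum, ← Finset.sum_add_distrib]
    apply Finset.sum_congr rfl
    intro i _
    simp [add_smul, smul_smul]
  obtain ⟨f, u, hfK, hfc⟩ := geometric_hahn_banach_closed_point hKconv (cone_closed v) hcK
  have h0K : (0 : n → ℝ) ∈ K := ⟨0, fun i => le_refl 0, by simp⟩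
  have hu0 : 0 < u := by simpa using hfK 0 h0K
  -- every element of K has f ≤ 0
  have hfK0 : ∀ x ∈ K, f x ≤ 0 := by
    rintro x ⟨μ, hμ, rfl⟩
    by_contra hpos
    push_neg at hpos
    have hmem : ∀ s : ℝ, 0 ≤ s → s • (∑ i, μ i • v i) ∈ K := by
      intro s hs
      refine ⟨fun i => s * μ i, fun i => mul_nonneg hs (hμ i), ?_⟩
      rw [Finset.smul_sum]
      exact Finset.sum_congr rfl fun i _ => (smul_smul s (μ i) (v i))
    set s : ℝ := (u + 1) / f (∑ i, μ i • v i) with hs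
    have hs0 : 0 ≤ s := div_nonneg (by linarith) hpos.le
    have := hfK _ (hmem s hs0)
    rw [map_smul, smul_eq_mul, hs, div_mul_cancel₀ _ hpos.ne'] at this
    linarith
  -- v i ∈ K
  have hvK : ∀ i, f (v i) ≤ 0 := by
    intro i
    apply hfK0
    refine ⟨fun j => if j = i then 1 else 0, fun j => by positivity, ?_⟩
    simp [ite_smul]
  -- represent f by a vector w
  set w : n → ℝ := fun a => f (Pi.single a 1) with hw
  have hrep : ∀ y : n → ℝ, f y = ∑ a, y a * w a := by
    intro y
    conv_lhs => rw [pi_eq_sum_univ y]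
    rw [map_sum]
    apply Finset.sum_congr rfl
    intro a _
    rw [map_smul, smul_eq_mul, hw]
    congr 1
    congr 1
    funext j
    simp [Pi.single, Function.update]
    exact if_congr (eq_comm) rfl rfl
  have hkey := h (fun a => -w a) (fun i => by
    have := hvK i
    rw [hrep] at this
    simp only [mul_neg]
    rw [Finset.sum_neg_distrib]
    linarith)
  rw [hrep c] at hfc
  simp only [mul_neg] at hkey
  rw [Finset.sum_neg_distrib] at hkey
  linarith

/-- For any finite bimatrix game (payoffs are automatically bounded),
there is a constant `C ≥ 0` such that for every follower action `b` and every regret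
tolerance `r ≥ 0` for which `b` is forceable with regret at most `r`, the optimistic
Stackelberg value satisfies `OSV(b,r) ≤ SV + C·r`: every leader mixed strategy `x` for
which `b` is an `r`-approximate best response yields leader payoff at most `SV + C·r`.
Here `SV` is the Stackelberg value, i.e. the least upper bound of the leader's payoffs
over pairs `(x, b)` where `b` is an (exact) best response to `x`. -/
theorem optimistic_stackelberg_value_linear_bound
    (A B : Type*) [Fintype A] [Fintype B] [Nonempty A] [Nonempty B]
    (UL : A → B → ℝ) (UF : B → A → ℝ) (SV : ℝ)
    (hSV : IsLUB
      {v : ℝ | ∃ (b : B) (x : A → ℝ), (∀ a, 0 ≤ x a) ∧ (∑ a, x a = 1) ∧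
        (∀ b' : B, ∑ a, x a * UF b' a ≤ ∑ a, x a * UF b a) ∧
        v = ∑ a, x a * UL a b} SV) :
    ∃ C : ℝ, 0 ≤ C ∧
      ∀ (b : B) (r : ℝ), 0 ≤ r →
        ∀ x : A → ℝ, (∀ a, 0 ≤ x a) → (∑ a, x a = 1) →
          (∀ b' : B, ∑ a, x a * UF b' a ≤ (∑ a, x a * UF b a) + r) →
          ∑ a, x a * UL a b ≤ SV + C * r := by
  classical
  have hsum_opt : ∀ f : Option A → ℝ, ∑ o, f o = f none + ∑ a, f (some a) := by
    intro f; rw [univ_option, Finset.sum_insertNone]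
  have key : ∀ b : B, ∃ Cb : ℝ, 0 ≤ Cb ∧ ∀ (r : ℝ), 0 ≤ r →
      ∀ x : A → ℝ, (∀ a, 0 ≤ x a) → (∑ a, x a = 1) →
      (∀ b' : B, ∑ a, x a * UF b' a ≤ (∑ a, x a * UF b a) + r) →
      ∑ a, x a * UL a b ≤ SV + Cb * r := by
    intro b
    set v : (A ⊕ (B ⊕ Bool)) → Option A → ℝ := fun i o =>
      match i, o with
      | Sum.inl a', o => if o = some a' then 1 else 0
      | Sum.inr (Sum.inl b'), none => 0
      | Sum.inr (Sum.inl b'), some a => UF b a - UF b' a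
      | Sum.inr (Sum.inr true), none => 1
      | Sum.inr (Sum.inr true), some _ => -1
      | Sum.inr (Sum.inr false), none => -1
      | Sum.inr (Sum.inr false), some _ => 1
      with hv
    set c : Option A → ℝ := fun o =>
      match o with
      | none => SV
      | some a => -(UL a b)
      with hc
    have hvA : ∀ (a' : A) (o : Option A), v (Sum.inl a') o = if o = some a' then 1 else 0 := by
      intro a' o; rw [hv]
    have hvBn : ∀ b', v (Sum.inr (Sum.inl b')) none = 0 := by intro b'; rw [hv]
    have hvBs : ∀ b' a, v (Sum.inr (Sum.inl b')) (some a) = UF b a - UF b' a := by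
      intro b' a; rw [hv]
    have hvTn : v (Sum.inr (Sum.inr true)) none = 1 := by rw [hv]
    have hvTs : ∀ a, v (Sum.inr (Sum.inr true)) (some a) = -1 := by intro a; rw [hv]
    have hvFn : v (Sum.inr (Sum.inr false)) none = -1 := by rw [hv]
    have hvFs : ∀ a, v (Sum.inr (Sum.inr false)) (some a) = 1 := by intro a; rw [hv]
    have hcn : c none = SV := by rw [hc]
    have hcs : ∀ a, c (some a) = -(UL a b) := by intro a; rw [hc]
    obtain ⟨μ, hμ, hcv⟩ : ∃ μ : (A ⊕ (B ⊕ Bool)) → ℝ, (∀ i, 0 ≤ μ i) ∧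
        c = ∑ i, μ i • v i := by
      apply farkas
      intro z hz
      have hx0 : ∀ a, 0 ≤ z (some a) := by
        intro a
        have h1 := hz (Sum.inl a)
        rw [hsum_opt] at h1
        simpa [hvA] using h1
      have hteq : z none = ∑ a, z (some a) := by
        have h1 := hz (Sum.inr (Sum.inr true))
        have h2 := hz (Sum.inr (Sum.inr false))
        rw [hsum_opt] at h1 h2
        simp only [hvTn, hvTs, hvFn, hvFs, one_mul, neg_one_mul] at h1 h2
        rw [Finset.sum_neg_distrib] at h1
        linarith
      have hbr : ∀ b' : B, ∑ a, z (some a) * UF b' a ≤ ∑ a, z (some a) * UF b a := by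
        intro b'
        have h1 := hz (Sum.inr (Sum.inl b'))
        rw [hsum_opt, hvBn b', zero_mul, zero_add] at h1
        simp only [hvBs, sub_mul] at h1
        rw [Finset.sum_sub_distrib] at h1
        have e1 : ∑ a, z (some a) * UF b' a = ∑ a, UF b' a * z (some a) :=
          Finset.sum_congr rfl fun a _ => mul_comm _ _
        have e2 : ∑ a, z (some a) * UF b a = ∑ a, UF b a * z (some a) :=
          Finset.sum_congr rfl fun a _ => mul_comm _ _
        rw [e1, e2]; linarith
      -- goal : 0 ≤ ∑ o, c o * z o
      rw [hsum_opt]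
      simp only [hcn, hcs, neg_mul]
      rw [Finset.sum_neg_distrib]
      have ht0 : 0 ≤ z none := by
        rw [hteq]; exact Finset.sum_nonneg fun a _ => hx0 a
      rcases eq_or_lt_of_le ht0 with hteq0 | htpos
      · -- z none = 0, hence all z (some a) = 0
        have hsum0 : ∑ a, z (some a) = 0 := by rw [← hteq, ← hteq0]
        have hall := (Finset.sum_eq_zero_iff_of_nonneg (fun a _ => hx0 a)).mp hsum0
        have hz0 : ∑ a, UL a b * z (some a) = 0 :=
          Finset.sum_eq_zero fun a _ => by rw [hall a (Finset.mem_univ a), mul_zero]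
        rw [hz0, ← hteq0]
        simp
      · -- z none > 0
        have hyval : ∑ a, (z (some a) / z none) * UL a b ≤ SV := by
          apply hSV.1
          refine ⟨b, fun a => z (some a) / z none,
            fun a => div_nonneg (hx0 a) htpos.le, ?_, ?_, rfl⟩
          · rw [← Finset.sum_div, ← hteq, div_self htpos.ne']
          · intro b'
            have hdiv : ∀ w : A → ℝ, ∑ a, z (some a) / z none * w a
                = (∑ a, z (some a) * w a) / z none := by
              intro w
              rw [Finset.sum_div]
              exact Finset.sum_congr rfl fun a _ => by ring
            rw [hdiv, hdiv]
            exact div_le_div_of_nonneg_right (hbr b') htpos.le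
        have hdiv2 : ∑ a, (z (some a) / z none) * UL a b
            = (∑ a, UL a b * z (some a)) / z none := by
          rw [Finset.sum_div]
          exact Finset.sum_congr rfl fun a _ => by ring
        rw [hdiv2, div_le_iff₀ htpos] at hyval
        nlinarith
    -- Now use the Farkas certificate
    have hval : ∀ o, c o = ∑ i, μ i * v i o := by
      intro o
      rw [hcv]
      rw [Finset.sum_apply]
      exact Finset.sum_congr rfl fun i _ => rfl
    have e1 : SV = μ (Sum.inr (Sum.inr true)) - μ (Sum.inr (Sum.inr false)) := by
      have h0 := hval none
      rw [hcn, Fintype.sum_sum_type, Fintype.sum_sum_type, Fintype.sum_bool] at h0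
      have hA0 : ∑ a' : A, μ (Sum.inl a') * v (Sum.inl a') none = 0 :=
        Finset.sum_eq_zero fun a' _ => by rw [hvA]; simp
      have hB0 : ∑ b' : B, μ (Sum.inr (Sum.inl b')) * v (Sum.inr (Sum.inl b')) none = 0 :=
        Finset.sum_eq_zero fun b' _ => by rw [hvBn b', mul_zero]
      rw [hA0, hB0, hvTn, hvFn] at h0
      linarith
    have e2 : ∀ a, UL a b = -(μ (Sum.inl a))
        - (∑ b', μ (Sum.inr (Sum.inl b')) * (UF b a - UF b' a))
        + (μ (Sum.inr (Sum.inr true)) - μ (Sum.inr (Sum.inr false))) := by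
      intro a
      have h0 := hval (some a)
      rw [hcs, Fintype.sum_sum_type, Fintype.sum_sum_type, Fintype.sum_bool] at h0
      have hA1 : ∑ a' : A, μ (Sum.inl a') * v (Sum.inl a') (some a) = μ (Sum.inl a) := by
        have hcg : ∀ a' ∈ Finset.univ, μ (Sum.inl a') * v (Sum.inl a') (some a)
            = if a = a' then μ (Sum.inl a') else 0 := by
          intro a' _
          rw [hvA]
          by_cases h : a = a' <;> simp [h]
        rw [Finset.sum_congr rfl hcg, Finset.sum_ite_eq, if_pos (Finset.mem_univ a)]
      have hB1 : ∑ b' : B, μ (Sum.inr (Sum.inl b')) * v (Sum.inr (Sum.inl b')) (some a)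
          = ∑ b' : B, μ (Sum.inr (Sum.inl b')) * (UF b a - UF b' a) :=
        Finset.sum_congr rfl fun b' _ => by rw [hvBs]
      rw [hA1, hB1, hvTs a, hvFs a] at h0
      linarith
    refine ⟨∑ b', μ (Sum.inr (Sum.inl b')),
      Finset.sum_nonneg fun b' _ => hμ _, ?_⟩
    intro r hr x hx0 hx1 hreg
    have swap : ∑ a, x a * ∑ b', μ (Sum.inr (Sum.inl b')) * (UF b a - UF b' a)
        = ∑ b', μ (Sum.inr (Sum.inl b'))
            * ((∑ a, x a * UF b a) - ∑ a, x a * UF b' a) := by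
      calc ∑ a, x a * ∑ b', μ (Sum.inr (Sum.inl b')) * (UF b a - UF b' a)
          = ∑ a, ∑ b', x a * (μ (Sum.inr (Sum.inl b')) * (UF b a - UF b' a)) := by
            exact Finset.sum_congr rfl fun a _ => Finset.mul_sum _ _ _
        _ = ∑ b', ∑ a, x a * (μ (Sum.inr (Sum.inl b')) * (UF b a - UF b' a)) :=
            Finset.sum_comm
        _ = ∑ b', μ (Sum.inr (Sum.inl b'))
            * ((∑ a, x a * UF b a) - ∑ a, x a * UF b' a) := by
            apply Finset.sum_congr rfl
            intro b' _
            rw [← Finset.sum_sub_distrib, Finset.mul_sum]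
            exact Finset.sum_congr rfl fun a _ => by ring
    have f1 : ∑ a, x a * UL a b
        = -(∑ a, x a * μ (Sum.inl a))
          - (∑ b', μ (Sum.inr (Sum.inl b'))
              * ((∑ a, x a * UF b a) - ∑ a, x a * UF b' a))
          + (μ (Sum.inr (Sum.inr true)) - μ (Sum.inr (Sum.inr false))) := by
      calc ∑ a, x a * UL a b
          = ∑ a, (-(x a * μ (Sum.inl a))
              - x a * (∑ b', μ (Sum.inr (Sum.inl b')) * (UF b a - UF b' a))
              + x a * (μ (Sum.inr (Sum.inr true)) - μ (Sum.inr (Sum.inr false)))) := by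
            apply Finset.sum_congr rfl
            intro a _
            rw [e2 a]; ring
        _ = -(∑ a, x a * μ (Sum.inl a))
              - (∑ a, x a * (∑ b', μ (Sum.inr (Sum.inl b')) * (UF b a - UF b' a)))
              + (∑ a, x a) * (μ (Sum.inr (Sum.inr true)) - μ (Sum.inr (Sum.inr false))) := by
            rw [Finset.sum_add_distrib, Finset.sum_sub_distrib,
              Finset.sum_neg_distrib, ← Finset.sum_mul]
        _ = _ := by rw [hx1, one_mul, swap]
    have f2 : -(∑ b', μ (Sum.inr (Sum.inl b'))
          * ((∑ a, x a * UF b a) - ∑ a, x a * UF b' a))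
        ≤ (∑ b', μ (Sum.inr (Sum.inl b'))) * r := by
      rw [Finset.sum_mul, ← Finset.sum_neg_distrib]
      apply Finset.sum_le_sum
      intro b' _
      have h1 := hreg b'
      nlinarith [hμ (Sum.inr (Sum.inl b'))]
    have f3 : 0 ≤ ∑ a, x a * μ (Sum.inl a) :=
      Finset.sum_nonneg fun a _ => mul_nonneg (hx0 a) (hμ _)
    rw [f1]
    linarith [e1]
  choose Cb hCb0 hCb using key
  refine ⟨∑ b, Cb b, Finset.sum_nonneg fun b _ => hCb0 b, ?_⟩
  intro b r hr x hx0 hx1 hreg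
  have := hCb b r hr x hx0 hx1 hreg
  have hle : Cb b ≤ ∑ b', Cb b' :=
    Finset.single_le_sum (fun b' _ => hCb0 b') (Finset.mem_univ b)
  nlinarith
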